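/- Guidance limit of the coherence transport kernel, generic case: let g, N ∈ ℝ² be unit vectors with ⟨g, N⟩ > 0, and let g⊥ denote the rotation of g by 90°. For μ > 0 define the vector v_μ = ∫_{D} (1/|η|) · μ · exp(−(μ²/2) ⟨g⊥, η⟩²) · η dη, where D = {η ∈ ℝ² : |η| ≤ 1, ⟨η, N⟩ ≥ 0} is the closed half-disk determined by N. Then v_μ converges as μ → ∞, with lim_{μ→∞} v_μ = √(2π) · g; in particular the normalized transport direction v_μ/|v_μ| converges to the guidance vector g. -/

import Mathlib

open MeasureTheory Filter Real
open scoped ENNReal NNReal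

/-- Rotation of a vector of `ℝ²` by 90°. -/
noncomputable def perp (v : EuclideanSpace ℝ (Fin 2)) : EuclideanSpace ℝ (Fin 2) :=
  WithLp.toLp 2 ![-(v 1), v 0]

/-- The closed unit half-disk `{η : |η| ≤ 1, ⟨η, N⟩ ≥ 0}` determined by `N`. -/
def halfDisk (N : EuclideanSpace ℝ (Fin 2)) : Set (EuclideanSpace ℝ (Fin 2)) :=
  {η | ‖η‖ ≤ 1 ∧ 0 ≤ (inner ℝ η N : ℝ)}

/-- The (unnormalized) average transport direction of coherence transport:
`v_μ = ∫_D (1/|η|) μ exp(−(μ²/2)⟨g⊥, η⟩²) η dη` over the half-disk `D`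
determined by the fill-front normal `N`. -/
noncomputable def transportVec (g N : EuclideanSpace ℝ (Fin 2)) (μ : ℝ) :
    EuclideanSpace ℝ (Fin 2) :=
  ∫ η in halfDisk N,
    ((1 / ‖η‖) * μ * Real.exp (-(μ ^ 2 / 2) * (inner ℝ (perp g) η : ℝ) ^ 2)) • η

/-! ### Auxiliary scaling lemmas on `ℝ × ℝ` -/

lemma aux_prod_smul_right (r : ℝ≥0) :
    (volume : Measure ℝ).prod ((r : ℝ≥0∞) • (volume : Measure ℝ))
      = (r : ℝ≥0∞) • (volume : Measure ℝ).prod volume := by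
  haveI : SigmaFinite ((r : ℝ≥0∞) • (volume : Measure ℝ)) := by
    have : ((r : ℝ≥0∞) • (volume : Measure ℝ)) = r • volume := rfl
    rw [this]; infer_instance
  refine Measure.prod_eq fun s t hs ht => ?_
  simp [Measure.prod_prod]
  rw [ENNReal.smul_def, smul_eq_mul]; ring

lemma aux_map_scale_snd {c : ℝ} (hc : c ≠ 0) :
    Measure.map (fun p : ℝ × ℝ => (p.1, c * p.2)) volume
      = ENNReal.ofReal |c⁻¹| • volume := by
  have h1 : (fun p : ℝ × ℝ => (p.1, c * p.2)) = Prod.map id (fun x => c * x) := rfl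
  rw [MeasureTheory.Measure.volume_eq_prod, h1, ← Measure.map_prod_map _ _ measurable_id
      (measurable_const_mul c), Measure.map_id, Real.map_volume_mul_left hc]
  have h2 : ENNReal.ofReal |c⁻¹| = ((Real.toNNReal |c⁻¹| : ℝ≥0) : ℝ≥0∞) := rfl
  rw [h2, aux_prod_smul_right, ← MeasureTheory.Measure.volume_eq_prod]

lemma aux_integral_scale_snd {V : Type*} [NormedAddCommGroup V] [NormedSpace ℝ V]
    (f : ℝ × ℝ → V) {μ : ℝ} (hμ : 0 < μ) :
    ∫ p : ℝ × ℝ, f p = ∫ p : ℝ × ℝ, μ⁻¹ • f (p.1, μ⁻¹ * p.2) := by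
  have hμ' : μ⁻¹ ≠ 0 := inv_ne_zero hμ.ne'
  let e : ℝ × ℝ ≃ᵐ ℝ × ℝ :=
    ((Homeomorph.refl ℝ).prodCongr (Homeomorph.mulLeft₀ μ⁻¹ hμ')).toMeasurableEquiv
  have h3 : ∫ p : ℝ × ℝ, f (p.1, μ⁻¹ * p.2) = μ • ∫ p : ℝ × ℝ, f p := by
    have h := MeasureTheory.integral_map_equiv (μ := (volume : Measure (ℝ × ℝ))) e f
    rw [show ⇑e = (fun p : ℝ × ℝ => (p.1, μ⁻¹ * p.2)) from rfl, aux_map_scale_snd hμ',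
      inv_inv, abs_of_pos hμ, integral_smul_measure, ENNReal.toReal_ofReal hμ.le] at h
    exact h.symm
  rw [integral_smul, h3, smul_smul, inv_mul_cancel₀ hμ.ne', one_smul]

/-! ### The integrand after rotation and rescaling -/

/-- The rotated integrand on `ℝ × ℝ`. -/
noncomputable def auxF (g pg : EuclideanSpace ℝ (Fin 2)) (a bb μ : ℝ) :
    ℝ × ℝ → EuclideanSpace ℝ (Fin 2) :=
  Set.indicator {q : ℝ × ℝ | Real.sqrt (q.1 ^ 2 + q.2 ^ 2) ≤ 1 ∧ 0 ≤ q.1 * a + q.2 * bb}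
    (fun q => ((1 / Real.sqrt (q.1 ^ 2 + q.2 ^ 2)) * μ *
      Real.exp (-(μ ^ 2 / 2) * q.2 ^ 2)) • (q.1 • g + q.2 • pg))

/-- The rotated integrand after rescaling the second variable by `μ`. -/
noncomputable def auxH (g pg : EuclideanSpace ℝ (Fin 2)) (a bb μ : ℝ)
    (p : ℝ × ℝ) : EuclideanSpace ℝ (Fin 2) :=
  μ⁻¹ • auxF g pg a bb μ (p.1, μ⁻¹ * p.2)

/-- Pointwise limit of `auxH` as `μ → ∞`. -/
noncomputable def auxL (g : EuclideanSpace ℝ (Fin 2)) : ℝ × ℝ → EuclideanSpace ℝ (Fin 2) :=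
  Set.indicator {q : ℝ × ℝ | q.1 ∈ Set.Ioo (0 : ℝ) 1}
    (fun q => Real.exp (-(1 / 2) * q.2 ^ 2) • g)

/-- Dominating function for `auxH`. -/
noncomputable def auxB : ℝ × ℝ → ℝ :=
  Set.indicator {q : ℝ × ℝ | |q.1| ≤ 1} (fun q => Real.exp (-(1 / 2) * q.2 ^ 2))

lemma auxH_eq (g pg : EuclideanSpace ℝ (Fin 2)) (a bb : ℝ) {μ : ℝ} (hμ : 0 < μ) :
    auxH g pg a bb μ = Set.indicator
      {q : ℝ × ℝ | Real.sqrt (q.1 ^ 2 + (μ⁻¹ * q.2) ^ 2) ≤ 1 ∧ 0 ≤ q.1 * a + (μ⁻¹ * q.2) * bb}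
      (fun q => ((1 / Real.sqrt (q.1 ^ 2 + (μ⁻¹ * q.2) ^ 2)) *
        Real.exp (-(1 / 2) * q.2 ^ 2)) • (q.1 • g + (μ⁻¹ * q.2) • pg)) := by
  funext p
  simp only [auxH, auxF, Set.indicator_apply, Set.mem_setOf_eq]
  by_cases hp : Real.sqrt (p.1 ^ 2 + (μ⁻¹ * p.2) ^ 2) ≤ 1 ∧ 0 ≤ p.1 * a + (μ⁻¹ * p.2) * bb
  · rw [if_pos hp, if_pos hp, smul_smul]
    congr 1
    have h1 : -(μ ^ 2 / 2) * (μ⁻¹ * p.2) ^ 2 = -(1 / 2) * p.2 ^ 2 := by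
      field_simp
    rw [h1]
    have h2 : μ⁻¹ * (1 / Real.sqrt (p.1 ^ 2 + (μ⁻¹ * p.2) ^ 2) * μ *
        Real.exp (-(1 / 2) * p.2 ^ 2)) = (μ⁻¹ * μ) * (1 / Real.sqrt (p.1 ^ 2 + (μ⁻¹ * p.2) ^ 2) *
        Real.exp (-(1 / 2) * p.2 ^ 2)) := by ring
    rw [h2, inv_mul_cancel₀ hμ.ne', one_mul]
  · rw [if_neg hp, if_neg hp, smul_zero]

lemma auxH_norm_le (g pg : EuclideanSpace ℝ (Fin 2))
    (hn : ∀ t s : ℝ, ‖t • g + s • pg‖ = Real.sqrt (t ^ 2 + s ^ 2))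
    (a bb : ℝ) {μ : ℝ} (hμ : 0 < μ) (p : ℝ × ℝ) :
    ‖auxH g pg a bb μ p‖ ≤ auxB p := by
  rw [auxH_eq g pg a bb hμ]
  simp only [auxB, Set.indicator_apply, Set.mem_setOf_eq]
  by_cases hp : Real.sqrt (p.1 ^ 2 + (μ⁻¹ * p.2) ^ 2) ≤ 1 ∧ 0 ≤ p.1 * a + (μ⁻¹ * p.2) * bb
  · have habs : |p.1| ≤ 1 := by
      have h1 : |p.1| = Real.sqrt (p.1 ^ 2) := (Real.sqrt_sq_eq_abs p.1).symm
      rw [h1]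
      refine le_trans (Real.sqrt_le_sqrt ?_) hp.1
      nlinarith [sq_nonneg (μ⁻¹ * p.2)]
    rw [if_pos hp, if_pos habs, norm_smul, hn]
    set r := Real.sqrt (p.1 ^ 2 + (μ⁻¹ * p.2) ^ 2) with hr
    have hrnn : (0 : ℝ) ≤ r := Real.sqrt_nonneg _
    rcases eq_or_lt_of_le hrnn with h0 | h0
    · rw [← h0, mul_zero]
      positivity
    · have heq2 : 1 / r * Real.exp (-(1 / 2) * p.2 ^ 2) * r
          = Real.exp (-(1 / 2) * p.2 ^ 2) := by field_simp
      rw [Real.norm_eq_abs, abs_of_nonneg (by positivity), heq2]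
  · rw [if_neg hp, norm_zero]
    split_ifs
    · exact Real.exp_nonneg _
    · exact le_refl 0

lemma auxB_integrable : Integrable auxB (volume : Measure (ℝ × ℝ)) := by
  have heq : auxB = fun p : ℝ × ℝ =>
      (Set.indicator (Set.Icc (-1 : ℝ) 1) (fun _ => (1 : ℝ)) p.1) *
        Real.exp (-(1 / 2) * p.2 ^ 2) := by
    funext p
    simp only [auxB, Set.indicator_apply, Set.mem_setOf_eq, Set.mem_Icc]
    by_cases hp : |p.1| ≤ 1
    · rw [if_pos hp, if_pos (abs_le.mp hp), one_mul]
    · rw [if_neg hp, if_neg (fun h => hp (abs_le.mpr h)), zero_mul]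
  rw [heq, MeasureTheory.Measure.volume_eq_prod]
  exact Integrable.mul_prod
    ((integrable_indicator_iff measurableSet_Icc).2
      (integrableOn_const measure_Icc_lt_top.ne))
    (integrable_exp_neg_mul_sq (by norm_num : (0 : ℝ) < 1 / 2))

lemma auxL_integral (g : EuclideanSpace ℝ (Fin 2)) :
    ∫ p : ℝ × ℝ, auxL g p = Real.sqrt (2 * π) • g := by
  have heq : auxL g = fun p : ℝ × ℝ =>
      ((Set.indicator (Set.Ioo (0 : ℝ) 1) (fun _ => (1 : ℝ)) p.1) *
        Real.exp (-(1 / 2) * p.2 ^ 2)) • g := by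
    funext p
    simp only [auxL, Set.indicator_apply, Set.mem_setOf_eq]
    by_cases hp : p.1 ∈ Set.Ioo (0 : ℝ) 1
    · rw [if_pos hp, if_pos hp, one_mul]
    · rw [if_neg hp, if_neg hp, zero_mul, zero_smul]
  rw [heq, integral_smul_const]
  congr 1
  have hprod : (∫ x : ℝ × ℝ, (Set.Ioo (0 : ℝ) 1).indicator (fun _ => (1 : ℝ)) x.1 *
      Real.exp (-(1 / 2) * x.2 ^ 2) ∂((volume : Measure ℝ).prod volume))
      = (∫ x : ℝ, (Set.Ioo (0 : ℝ) 1).indicator (fun _ => (1 : ℝ)) x) *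
        ∫ y : ℝ, Real.exp (-(1 / 2) * y ^ 2) := by
    exact integral_prod_mul (f := fun x : ℝ => (Set.Ioo (0 : ℝ) 1).indicator (fun _ => (1 : ℝ)) x)
      (g := fun y : ℝ => Real.exp (-(1 / 2) * y ^ 2))
  rw [MeasureTheory.Measure.volume_eq_prod, hprod]
  have h1 : ∫ x : ℝ, Set.indicator (Set.Ioo (0 : ℝ) 1) (fun _ => (1 : ℝ)) x = 1 := by
    rw [MeasureTheory.integral_indicator_const (1 : ℝ) measurableSet_Ioo]
    simp [Real.volume_Ioo]
  have h2 : ∫ x : ℝ, Real.exp (-(1 / 2) * x ^ 2) = Real.sqrt (2 * π) := by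
    rw [integral_gaussian (1 / 2 : ℝ)]
    congr 1
    ring
  rw [h1, h2, one_mul]

lemma auxH_aestronglyMeasurable (g pg : EuclideanSpace ℝ (Fin 2)) (a bb μ : ℝ) :
    AEStronglyMeasurable (auxH g pg a bb μ) (volume : Measure (ℝ × ℝ)) := by
  have hFmeas : Measurable (auxF g pg a bb μ) := by
    apply Measurable.indicator
    · apply Measurable.fun_smul
      · apply Measurable.mul
        apply Measurable.mul
        · exact (measurable_const.div
            ((((measurable_fst.pow measurable_const).add
              (measurable_snd.pow measurable_const))).sqrt))
        · exact measurable_const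
        · exact (measurable_const.mul (measurable_snd.pow measurable_const)).exp
      · exact (measurable_fst.smul measurable_const).add
          (measurable_snd.smul measurable_const)
    · apply MeasurableSet.inter
      · exact measurableSet_le
          ((((measurable_fst.pow measurable_const).add
            (measurable_snd.pow measurable_const))).sqrt) measurable_const
      · exact measurableSet_le measurable_const
          ((measurable_fst.mul measurable_const).add (measurable_snd.mul measurable_const))
  have : Measurable (auxH g pg a bb μ) := by
    apply Measurable.fun_const_smul
    exact hFmeas.comp (measurable_fst.prodMk (measurable_const.mul measurable_snd))
  exact this.aestronglyMeasurable

lemma auxH_tendsto (g pg : EuclideanSpace ℝ (Fin 2)) {a : ℝ} (bb : ℝ) (ha : 0 < a)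
    {p : ℝ × ℝ} (h0 : p.1 ≠ 0) (h1 : p.1 ≠ 1) (hm1 : p.1 ≠ -1) :
    Tendsto (fun μ => auxH g pg a bb μ p) atTop (nhds (auxL g p)) := by
  have hiu : Tendsto (fun μ : ℝ => μ⁻¹ * p.2) atTop (nhds 0) := by
    simpa using tendsto_inv_atTop_zero.mul_const p.2
  have hS : Tendsto (fun μ : ℝ => p.1 ^ 2 + (μ⁻¹ * p.2) ^ 2) atTop (nhds (p.1 ^ 2)) := by
    have h := tendsto_const_nhds (α := ℝ) (x := p.1 ^ 2) (f := atTop (α := ℝ)) |>.add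
      (hiu.pow 2)
    simpa using h
  have hsq : Tendsto (fun μ : ℝ => Real.sqrt (p.1 ^ 2 + (μ⁻¹ * p.2) ^ 2)) atTop
      (nhds |p.1|) := by
    have h := hS.sqrt
    simpa [Real.sqrt_sq_eq_abs] using h
  have hlin : Tendsto (fun μ : ℝ => p.1 * a + (μ⁻¹ * p.2) * bb) atTop (nhds (p.1 * a)) := by
    have h := tendsto_const_nhds (α := ℝ) (x := p.1 * a) (f := atTop (α := ℝ)) |>.add
      (hiu.mul_const bb)
    simpa using h
  rcases lt_trichotomy p.1 0 with ht | ht | ht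
  · -- p.1 < 0 : eventually outside the domain, and the limit is 0
    have hL : auxL g p = 0 := by
      simp only [auxL, Set.indicator_apply, Set.mem_setOf_eq, Set.mem_Ioo]
      rw [if_neg]
      rintro ⟨h, -⟩; linarith
    rw [hL]
    have hneg : ∀ᶠ μ : ℝ in atTop, p.1 * a + (μ⁻¹ * p.2) * bb < 0 :=
      hlin.eventually_lt_const (mul_neg_of_neg_of_pos ht ha)
    have hev : ∀ᶠ μ : ℝ in atTop, auxH g pg a bb μ p = 0 := by
      filter_upwards [hneg, eventually_gt_atTop (0 : ℝ)] with μ hμneg hμ0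
      rw [auxH_eq g pg a bb hμ0]
      simp only [Set.indicator_apply, Set.mem_setOf_eq]
      rw [if_neg]
      rintro ⟨-, h⟩; linarith
    exact Tendsto.congr' (hev.mono fun μ h => h.symm) tendsto_const_nhds
  · exact absurd ht h0
  · rcases lt_trichotomy p.1 1 with ht1 | ht1 | ht1
    · -- 0 < p.1 < 1 : the generic case
      have hE : auxL g p = Real.exp (-(1 / 2) * p.2 ^ 2) • g := by
        simp only [auxL, Set.indicator_apply, Set.mem_setOf_eq, Set.mem_Ioo]
        rw [if_pos ⟨ht, ht1⟩]
      rw [hE]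
      -- eventually the point is inside the rescaled domain
      have hev1 : ∀ᶠ μ : ℝ in atTop, Real.sqrt (p.1 ^ 2 + (μ⁻¹ * p.2) ^ 2) ≤ 1 := by
        have hlt : p.1 ^ 2 < 1 := by nlinarith
        filter_upwards [hS.eventually_lt_const hlt] with μ h
        exact Real.sqrt_le_one.mpr h.le
      have hev2 : ∀ᶠ μ : ℝ in atTop, 0 ≤ p.1 * a + (μ⁻¹ * p.2) * bb := by
        filter_upwards [hlin.eventually_const_lt (mul_pos ht ha)] with μ h
        exact h.le
      have hevform : ∀ᶠ μ : ℝ in atTop, auxH g pg a bb μ p =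
          ((1 / Real.sqrt (p.1 ^ 2 + (μ⁻¹ * p.2) ^ 2)) * Real.exp (-(1 / 2) * p.2 ^ 2)) •
            (p.1 • g + (μ⁻¹ * p.2) • pg) := by
        filter_upwards [hev1, hev2, eventually_gt_atTop (0 : ℝ)] with μ hc1 hc2 hμ0
        rw [auxH_eq g pg a bb hμ0]
        simp only [Set.indicator_apply, Set.mem_setOf_eq]
        rw [if_pos ⟨hc1, hc2⟩]
      -- the limit of the explicit formula
      have habs : |p.1| = p.1 := abs_of_pos ht
      have hscal : Tendsto (fun μ : ℝ => (1 / Real.sqrt (p.1 ^ 2 + (μ⁻¹ * p.2) ^ 2)) *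
          Real.exp (-(1 / 2) * p.2 ^ 2)) atTop
          (nhds ((1 / p.1) * Real.exp (-(1 / 2) * p.2 ^ 2))) := by
        have hd : Tendsto (fun μ : ℝ => 1 / Real.sqrt (p.1 ^ 2 + (μ⁻¹ * p.2) ^ 2)) atTop
            (nhds (1 / p.1)) := by
          have := tendsto_const_nhds (α := ℝ) (x := (1:ℝ)) (f := atTop (α := ℝ)) |>.div hsq
            (by rw [habs]; exact ht.ne')
          rwa [habs] at this
        exact hd.mul_const _
      have hvec : Tendsto (fun μ : ℝ => p.1 • g + (μ⁻¹ * p.2) • pg) atTop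
          (nhds (p.1 • g)) := by
        have h := (tendsto_const_nhds : Tendsto (fun _ : ℝ => p.1 • g) atTop
          (nhds (p.1 • g))).add (hiu.smul_const pg)
        simpa using h
      have hfull := hscal.smul hvec
      have hval : ((1 / p.1) * Real.exp (-(1 / 2) * p.2 ^ 2)) • (p.1 • g)
          = Real.exp (-(1 / 2) * p.2 ^ 2) • g := by
        rw [smul_smul]
        congr 1
        field_simp
      rw [hval] at hfull
      exact Tendsto.congr' (hevform.mono fun μ h => h.symm) hfull
    · exact absurd ht1 h1
    · -- p.1 > 1 : always outside the domain
      have hL : auxL g p = 0 := by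
        simp only [auxL, Set.indicator_apply, Set.mem_setOf_eq, Set.mem_Ioo]
        rw [if_neg]
        rintro ⟨-, h⟩; linarith
      rw [hL]
      have hev : ∀ᶠ μ : ℝ in atTop, auxH g pg a bb μ p = 0 := by
        filter_upwards [eventually_gt_atTop (0 : ℝ)] with μ hμ0
        rw [auxH_eq g pg a bb hμ0]
        simp only [Set.indicator_apply, Set.mem_setOf_eq]
        rw [if_neg]
        rintro ⟨h, -⟩
        have h2 : Real.sqrt (p.1 ^ 2) ≤ Real.sqrt (p.1 ^ 2 + (μ⁻¹ * p.2) ^ 2) :=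
          Real.sqrt_le_sqrt (by nlinarith [sq_nonneg (μ⁻¹ * p.2)])
        rw [Real.sqrt_sq_eq_abs, abs_of_pos (by linarith : (0:ℝ) < p.1)] at h2
        linarith
      exact Tendsto.congr' (hev.mono fun μ h => h.symm) tendsto_const_nhds

theorem coherence_transport_guidance_limit
    (g N : EuclideanSpace ℝ (Fin 2)) (hg : ‖g‖ = 1) (hN : ‖N‖ = 1)
    (hgN : 0 < (inner ℝ g N : ℝ)) :
    Tendsto (transportVec g N) atTop (nhds (Real.sqrt (2 * π) • g)) ∧
    Tendsto (fun μ => ‖transportVec g N μ‖⁻¹ • transportVec g N μ) atTop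
      (nhds g) := by
  classical
  set a : ℝ := (inner ℝ g N : ℝ) with ha_def
  set bb : ℝ := (inner ℝ (perp g) N : ℝ) with hbb_def
  -- coordinates of the inner product
  have hinner : ∀ x y : EuclideanSpace ℝ (Fin 2),
      (inner ℝ x y : ℝ) = x 0 * y 0 + x 1 * y 1 := by
    intro x y
    simp [PiLp.inner_apply, RCLike.inner_apply, Fin.sum_univ_two]
    ring
  have hg2 : g 0 ^ 2 + g 1 ^ 2 = 1 := by
    have h : Real.sqrt (‖g 0‖ ^ 2 + ‖g 1‖ ^ 2) = 1 := by
      rw [← Fin.sum_univ_two (f := fun i => ‖g i‖ ^ 2), ← EuclideanSpace.norm_eq]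
      exact hg
    have h2 := Real.sqrt_eq_one.mp h
    simpa [Real.norm_eq_abs, sq_abs] using h2
  have hp0 : perp g 0 = -(g 1) := rfl
  have hp1 : perp g 1 = g 0 := rfl
  have hgg : (inner ℝ g g : ℝ) = 1 := by
    rw [hinner]
    nlinarith [hg2]
  have hgp : (inner ℝ g (perp g) : ℝ) = 0 := by
    rw [hinner, hp0, hp1]; ring
  have hpg : (inner ℝ (perp g) g : ℝ) = 0 := by
    rw [hinner, hp0, hp1]; ring
  have hpp : (inner ℝ (perp g) (perp g) : ℝ) = 1 := by
    rw [hinner, hp0, hp1]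
    nlinarith [hg2]
  have hn : ∀ t s : ℝ, ‖t • g + s • perp g‖ = Real.sqrt (t ^ 2 + s ^ 2) := by
    intro t s
    have hq : (inner ℝ (t • g + s • perp g) (t • g + s • perp g) : ℝ) = t ^ 2 + s ^ 2 := by
      simp only [inner_add_left, inner_add_right, real_inner_smul_left, real_inner_smul_right,
        hgg, hgp, hpg, hpp]
      ring
    rw [norm_eq_sqrt_real_inner, hq]
  have hip : ∀ t s : ℝ, (inner ℝ (perp g) (t • g + s • perp g) : ℝ) = s := by
    intro t s
    simp only [inner_add_right, real_inner_smul_right, hpg, hpp]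
    ring
  have hiN : ∀ t s : ℝ, (inner ℝ (t • g + s • perp g) N : ℝ) = t * a + s * bb := by
    intro t s
    simp only [inner_add_left, real_inner_smul_left, ← ha_def, ← hbb_def]
  -- the orthonormal basis (g, g⊥)
  have honb : Orthonormal ℝ (![g, perp g] : Fin 2 → EuclideanSpace ℝ (Fin 2)) := by
    rw [orthonormal_iff_ite]
    intro i j
    fin_cases i <;> fin_cases j <;>
      simp [Matrix.cons_val_zero, Matrix.cons_val_one, Matrix.head_cons, hgg, hgp, hpg, hpp, hg,
        (by simpa using hn 0 1 : ‖perp g‖ = 1)]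
  have hcard : Fintype.card (Fin 2) = Module.finrank ℝ (EuclideanSpace ℝ (Fin 2)) := by
    simp [finrank_euclideanSpace_fin]
  let bas := basisOfOrthonormalOfCardEqFinrank honb hcard
  have hbas : ⇑bas = ![g, perp g] := coe_basisOfOrthonormalOfCardEqFinrank honb hcard
  let b : OrthonormalBasis (Fin 2) ℝ (EuclideanSpace ℝ (Fin 2)) :=
    bas.toOrthonormalBasis (by rwa [hbas])
  have hb : ⇑b = ![g, perp g] := by
    rw [Module.Basis.coe_toOrthonormalBasis, hbas]
  have hb0 : b 0 = g := by rw [hb]; rfl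
  have hb1 : b 1 = perp g := by rw [hb]; rfl
  -- the measure-preserving parametrization of the plane
  let Ψ : (ℝ × ℝ) ≃ᵐ EuclideanSpace ℝ (Fin 2) :=
    (MeasurableEquiv.finTwoArrow.symm.trans
      ((MeasurableEquiv.toLp 2 (Fin 2 → ℝ)).trans
        b.repr.symm.toHomeomorph.toMeasurableEquiv))
  have hΨmp : MeasurePreserving Ψ volume volume := by
    have h1 : MeasurePreserving (MeasurableEquiv.finTwoArrow (α := ℝ)).symm volume volume :=
      (volume_preserving_finTwoArrow ℝ).symm _
    have h2 : MeasurePreserving (MeasurableEquiv.toLp 2 (Fin 2 → ℝ)) volume volume :=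
      (EuclideanSpace.volume_preserving_symm_measurableEquiv_toLp (Fin 2)).symm _
    have h3 : MeasurePreserving (⇑b.repr.symm) volume volume := b.measurePreserving_repr_symm
    exact (h3.comp h2).comp h1
  have hΨval : ∀ p : ℝ × ℝ, Ψ p = p.1 • g + p.2 • perp g := by
    intro p
    have h1 : Ψ p = b.repr.symm ((MeasurableEquiv.toLp 2 (Fin 2 → ℝ))
        (MeasurableEquiv.finTwoArrow.symm p)) := rfl
    rw [h1, ← OrthonormalBasis.sum_repr_symm, Fin.sum_univ_two, hb0, hb1]
    rfl
  -- step A : rotating the integral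
  have hD : MeasurableSet (halfDisk N) := by
    have hcl : IsClosed (halfDisk N) := by
      have h1 : IsClosed {η : EuclideanSpace ℝ (Fin 2) | ‖η‖ ≤ 1} :=
        isClosed_le continuous_norm continuous_const
      have h2 : IsClosed {η : EuclideanSpace ℝ (Fin 2) | 0 ≤ (inner ℝ η N : ℝ)} :=
        isClosed_le continuous_const (Continuous.inner continuous_id continuous_const)
      exact h1.inter h2
    exact hcl.measurableSet
  have stepA : ∀ μ : ℝ, transportVec g N μ = ∫ p : ℝ × ℝ, auxF g (perp g) a bb μ p := by
    intro μ
    rw [transportVec, ← integral_indicator hD, ← hΨmp.integral_comp Ψ.measurableEmbedding]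
    congr 1
    funext p
    have hmem : Ψ p ∈ halfDisk N ↔
        (Real.sqrt (p.1 ^ 2 + p.2 ^ 2) ≤ 1 ∧ 0 ≤ p.1 * a + p.2 * bb) := by
      rw [hΨval]
      constructor
      · rintro ⟨hh1, hh2⟩
        exact ⟨by rwa [hn] at hh1, by rwa [hiN] at hh2⟩
      · rintro ⟨hh1, hh2⟩
        exact ⟨by rwa [hn], by rwa [hiN]⟩
    simp only [Set.indicator_apply, Set.mem_setOf_eq, auxF]
    by_cases hc : Real.sqrt (p.1 ^ 2 + p.2 ^ 2) ≤ 1 ∧ 0 ≤ p.1 * a + p.2 * bb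
    · rw [if_pos (hmem.mpr hc), if_pos hc, hΨval p, hn, hip]
    · rw [if_neg (fun h => hc (hmem.mp h)), if_neg hc]
  -- step B : rescaling the second variable
  have stepB : ∀ μ : ℝ, 0 < μ →
      (∫ p : ℝ × ℝ, auxF g (perp g) a bb μ p) = ∫ p : ℝ × ℝ, auxH g (perp g) a bb μ p := by
    intro μ hμ
    exact aux_integral_scale_snd (auxF g (perp g) a bb μ) hμ
  -- step C : dominated convergence
  have hmain : Tendsto (fun μ => ∫ p : ℝ × ℝ, auxH g (perp g) a bb μ p) atTop
      (nhds (Real.sqrt (2 * π) • g)) := by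
    rw [← auxL_integral g]
    refine tendsto_integral_filter_of_dominated_convergence auxB ?_ ?_ auxB_integrable ?_
    · exact Eventually.of_forall fun μ => auxH_aestronglyMeasurable g (perp g) a bb μ
    · filter_upwards [eventually_gt_atTop (0 : ℝ)] with μ hμ
      exact Eventually.of_forall fun p => auxH_norm_le g (perp g) hn a bb hμ p
    · have hZ : (volume : Measure (ℝ × ℝ))
          (({0, 1, -1} : Set ℝ) ×ˢ (Set.univ : Set ℝ)) = 0 := by
        rw [MeasureTheory.Measure.volume_eq_prod, Measure.prod_prod]
        have hfin : ((volume : Measure ℝ)) ({0, 1, -1} : Set ℝ) = 0 :=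
          (Set.toFinite ({0, 1, -1} : Set ℝ)).countable.measure_zero _
        rw [hfin, zero_mul]
      have hae : ∀ᵐ p : ℝ × ℝ ∂(volume : Measure (ℝ × ℝ)),
          p ∉ (({0, 1, -1} : Set ℝ) ×ˢ (Set.univ : Set ℝ)) :=
        measure_eq_zero_iff_ae_notMem.mp hZ
      filter_upwards [hae] with p hp
      simp only [Set.mem_prod, Set.mem_univ, and_true, Set.mem_insert_iff,
        Set.mem_singleton_iff, not_or] at hp
      exact auxH_tendsto g (perp g) bb hgN hp.1 hp.2.1 hp.2.2
  have hmain1 : Tendsto (transportVec g N) atTop (nhds (Real.sqrt (2 * π) • g)) := by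
    refine Tendsto.congr' ?_ hmain
    filter_upwards [eventually_gt_atTop (0 : ℝ)] with μ hμ
    rw [← stepB μ hμ, ← stepA μ]
  refine ⟨hmain1, ?_⟩
  have hπ : (0 : ℝ) < Real.sqrt (2 * π) := Real.sqrt_pos.2 (by positivity)
  have hnorm : Tendsto (fun μ => ‖transportVec g N μ‖) atTop (nhds (Real.sqrt (2 * π))) := by
    have h := hmain1.norm
    have hval : ‖Real.sqrt (2 * π) • g‖ = Real.sqrt (2 * π) := by
      rw [norm_smul, hg, mul_one, Real.norm_eq_abs, abs_of_pos hπ]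
    rwa [hval] at h
  have hinv : Tendsto (fun μ => ‖transportVec g N μ‖⁻¹) atTop
      (nhds (Real.sqrt (2 * π))⁻¹) := hnorm.inv₀ hπ.ne'
  have h := hinv.smul hmain1
  rw [smul_smul, inv_mul_cancel₀ hπ.ne', one_smul] at h
  exact h
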